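/- For any even integer n ≥ 2 and nonnegative integers a, b, c, d with a + b + c + d = n, define y as follows: y = 4(c+d) + 2(c+d)(1-c-d) if a+c = b+d; y = 4c + 2(c+d)(1-c-d) if a+c = b+d+2; y = 4d + 2(c+d)(1-c-d) if a+c = b+d-2; and y = 4 + 2(c+d)(1-c-d) otherwise. Then y ≤ 4. -/
import Mathlib

lemma aux_int (k : ℤ) : 0 ≤ (k - 1) * (k - 2) := by
  rcases le_or_gt k 1 with h | h
  · nlinarith
  · nlinarith [Int.add_one_le_iff.mpr h]

/-- For even `n ≥ 2` and naturals `a+b+c+d = n`, the case-defined quantity `y`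
is at most 4. -/
theorem stmt0 (n a b c d : ℕ) (hn : 2 ≤ n) (hev : Even n)
    (hsum : a + b + c + d = n) :
    (if (a : ℤ) + c = (b : ℤ) + d then
        4 * ((c : ℤ) + d) + 2 * ((c : ℤ) + d) * (1 - (c : ℤ) - d)
      else if (a : ℤ) + c = (b : ℤ) + d + 2 then
        4 * (c : ℤ) + 2 * ((c : ℤ) + d) * (1 - (c : ℤ) - d)
      else if (a : ℤ) + c = (b : ℤ) + d - 2 then
        4 * (d : ℤ) + 2 * ((c : ℤ) + d) * (1 - (c : ℤ) - d)
      else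
        4 + 2 * ((c : ℤ) + d) * (1 - (c : ℤ) - d)) ≤ 4 := by
  have hc : (0:ℤ) ≤ c := Int.ofNat_nonneg c
  have hd : (0:ℤ) ≤ d := Int.ofNat_nonneg d
  have h1 := aux_int ((c:ℤ) + d)
  split_ifs <;> nlinarith [mul_nonneg hc hd]
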